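/- Guessing probability of an XY-plane observable from the purifying system: let |Ψ⟩_ABC be a tripartite pure state whose reduced state on AB is ρ_AB = |0⟩⟨0| ⊗ σ₀ + |1⟩⟨1| ⊗ σ₁ with Tr σ₀ + Tr σ₁ = 1. If W is the outcome of a projective measurement on qubit A in a basis {(|0⟩ ± e^{iθ}|1⟩)/√2}, then 2 p_guess(W|C) − 1 = 2‖√σ₀ √σ₁‖₁, independently of θ. -/

import Mathlib

open ComplexOrder

/-- The square root of a positive semidefinite matrix, as defined in the older Mathlib
(`Matrix.PosSemidef.sqrt`, removed since). -/
noncomputable def Matrix.PosSemidef.sqrt {n : Type*} [Fintype n] [DecidableEq n] {𝕜 : Type*}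
    [RCLike 𝕜] {A : Matrix n n 𝕜} (hA : A.PosSemidef) : Matrix n n 𝕜 :=
  hA.1.eigenvectorUnitary.1 * Matrix.diagonal ((↑) ∘ (√·) ∘ hA.1.eigenvalues) *
    (star hA.1.eigenvectorUnitary : Matrix n n 𝕜)

/-- Trace norm ‖A‖₁ = Tr √(AᴴA). -/
noncomputable def traceNorm {n : Type*} [Fintype n] [DecidableEq n]
    (A : Matrix n n ℂ) : ℝ :=
  ((Matrix.posSemidef_conjTranspose_mul_self A).sqrt.trace).re

/-- The XY-plane measurement vector (|0⟩ + s·e^{iθ}|1⟩)/√2 on qubit A, s = ±1. -/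
noncomputable def wvec (θ : ℝ) (s : ℝ) : Fin 2 → ℂ :=
  ![1 / Real.sqrt 2, s * Complex.exp (Complex.I * θ) / Real.sqrt 2]

/-- Subnormalized conditional state of C given the outcome w of an XY-plane
measurement on qubit A of the tripartite pure state ψ (B is traced out). -/
noncomputable def condC {b c : Type*} [Fintype b] [Fintype c]
    (ψ : Fin 2 → b → c → ℂ) (w : Fin 2 → ℂ) : Matrix c c ℂ :=
  Matrix.of fun m m' =>
    ∑ j : b, (∑ i, star (w i) * ψ i j m) * star (∑ i, star (w i) * ψ i j m')

section SqrtAux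

open scoped MatrixOrder

lemma Matrix.PosSemidef.sqrt_eq_CFC {n : Type*} [Fintype n] [DecidableEq n] {A : Matrix n n ℂ}
    (hA : A.PosSemidef) : hA.sqrt = CFC.sqrt A := by
  rw [CFC.sqrt_eq_real_sqrt A hA.nonneg, cfcₙ_eq_cfc, hA.1.cfc_eq]
  rfl

lemma Matrix.PosSemidef.posSemidef_sqrt {n : Type*} [Fintype n] [DecidableEq n]
    {A : Matrix n n ℂ} (hA : A.PosSemidef) : hA.sqrt.PosSemidef := by
  rw [hA.sqrt_eq_CFC]
  exact Matrix.nonneg_iff_posSemidef.mp (CFC.sqrt_nonneg A)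

lemma Matrix.PosSemidef.sqrt_mul_self {n : Type*} [Fintype n] [DecidableEq n]
    {A : Matrix n n ℂ} (hA : A.PosSemidef) : hA.sqrt * hA.sqrt = A := by
  rw [hA.sqrt_eq_CFC]
  exact CFC.sqrt_mul_sqrt_self A hA.nonneg

lemma Matrix.PosSemidef.sq_sqrt {n : Type*} [Fintype n] [DecidableEq n]
    {A : Matrix n n ℂ} (hA : A.PosSemidef) : hA.sqrt ^ 2 = A := by
  rw [sq, hA.sqrt_mul_self]

lemma Matrix.PosSemidef.eq_of_sq_eq_sq {n : Type*} [Fintype n] [DecidableEq n]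
    {A B : Matrix n n ℂ} (hA : A.PosSemidef) (hB : B.PosSemidef) (hAB : A ^ 2 = B ^ 2) :
    A = B := by
  rw [← CFC.sqrt_sq A hA.nonneg, hAB, CFC.sqrt_sq B hB.nonneg]

lemma Matrix.PosSemidef.eq_sqrt_of_sq_eq {n : Type*} [Fintype n] [DecidableEq n]
    {A B : Matrix n n ℂ} (hA : A.PosSemidef) (hB : B.PosSemidef) (hAB : A ^ 2 = B) :
    A = hB.sqrt := by
  rw [hB.sqrt_eq_CFC, ← hAB, CFC.sqrt_sq A hA.nonneg]

end SqrtAux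

set_option maxHeartbeats 1000000

section Aux

open Matrix Polynomial

variable {n m : Type*} [Fintype n] [DecidableEq n] [Fintype m] [DecidableEq m]

lemma trace_sqrt_congr {A B : Matrix n n ℂ} (hA : A.PosSemidef) (hB : B.PosSemidef)
    (h : A = B) : hA.sqrt.trace = hB.sqrt.trace := by subst h; rfl

lemma trace_sqrt_eq_sum {A : Matrix n n ℂ} (hA : A.PosSemidef) :
    hA.sqrt.trace = ∑ i, (Real.sqrt (hA.1.eigenvalues i) : ℂ) := by
  rw [Matrix.PosSemidef.sqrt, Matrix.trace_mul_cycle,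
    Matrix.mem_unitaryGroup_iff'.mp hA.1.eigenvectorUnitary.2, one_mul, trace_diagonal]
  rfl

lemma charpoly_unitary_conj (U M : Matrix n n ℂ) (h1 : U * star U = 1)
    (h2 : star U * U = 1) : (U * M * star U).charpoly = M.charpoly := by
  have hone : (U.map ⇑C) * ((star U).map ⇑C) = (1 : Matrix n n ℂ[X]) := by
    rw [← Matrix.map_mul, h1, Matrix.map_one _ (map_zero C) (map_one C)]
  have hcomm : ∀ (P : Matrix n n ℂ[X]),
      P * Matrix.diagonal (fun _ => (X : ℂ[X])) = Matrix.diagonal (fun _ => (X : ℂ[X])) * P := by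
    intro P
    ext i j
    simp [Matrix.mul_apply, Matrix.diagonal_apply, mul_comm]
  have hmap : Matrix.charmatrix (U * M * star U) =
      U.map ⇑C * Matrix.charmatrix M * (star U).map ⇑C := by
    rw [Matrix.charmatrix, Matrix.charmatrix, RingHom.mapMatrix_apply, RingHom.mapMatrix_apply,
      Matrix.map_mul (f := (C : ℂ →+* ℂ[X])), Matrix.map_mul (f := (C : ℂ →+* ℂ[X])),
      Matrix.mul_sub, Matrix.sub_mul]
    congr 1
    rw [Matrix.scalar_apply, hcomm (U.map ⇑C), Matrix.mul_assoc, hone, Matrix.mul_one]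
  have hdet : (U.map ⇑C).det * ((star U).map ⇑C).det = 1 := by
    rw [← Matrix.det_mul, hone, Matrix.det_one]
  rw [Matrix.charpoly, Matrix.charpoly, hmap, Matrix.det_mul, Matrix.det_mul,
    mul_right_comm, hdet, one_mul]

lemma charmatrix_diag (d : n → ℂ) :
    charmatrix (Matrix.diagonal d) = Matrix.diagonal (fun i => (X : ℂ[X]) - C (d i)) := by
  ext i j
  by_cases h : i = j
  · subst h; simp
  · simp [h, Matrix.diagonal_apply_ne _ h]

lemma charpoly_diag (d : n → ℂ) :
    (Matrix.diagonal d).charpoly = ∏ i, ((X : ℂ[X]) - C (d i)) := by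
  rw [charpoly, charmatrix_diag, det_diagonal]

lemma roots_charpoly_hermitian {A : Matrix n n ℂ} (hA : A.IsHermitian) :
    A.charpoly.roots = Finset.univ.val.map (fun i => (hA.eigenvalues i : ℂ)) := by
  conv_lhs => rw [hA.spectral_theorem, Unitary.conjStarAlgAut_apply]
  rw [charpoly_unitary_conj _ _ (Matrix.mem_unitaryGroup_iff.mp hA.eigenvectorUnitary.2)
    (Matrix.mem_unitaryGroup_iff'.mp hA.eigenvectorUnitary.2), charpoly_diag]
  rw [Finset.prod_eq_multiset_prod]
  rw [show (fun i => (X : ℂ[X]) - C ((RCLike.ofReal ∘ hA.eigenvalues) i))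
      = (fun a => (X : ℂ[X]) - C a) ∘ (fun i => ((hA.eigenvalues i : ℂ))) from rfl,
    ← Multiset.map_map, Polynomial.roots_multiset_prod_X_sub_C]

lemma eval_charpoly (M : Matrix n n ℂ) (x : ℂ) :
    M.charpoly.eval x = (x • (1 : Matrix n n ℂ) - M).det := by
  rw [charpoly, ← Polynomial.coe_evalRingHom, RingHom.map_det]
  congr 1
  ext i j
  by_cases h : i = j
  · subst h
    simp [charmatrix_apply_eq, Matrix.one_apply, Matrix.sub_apply]
  · simp [charmatrix_apply_ne _ _ _ h, Matrix.one_apply_ne h, Matrix.sub_apply,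
      Matrix.smul_apply]

lemma charpoly_pow_mul_comm (A : Matrix m n ℂ) (B : Matrix n m ℂ) :
    (X : ℂ[X]) ^ (Fintype.card n) * (A * B).charpoly
      = (X : ℂ[X]) ^ (Fintype.card m) * (B * A).charpoly := by
  apply Polynomial.funext
  intro x
  simp only [Polynomial.eval_mul, Polynomial.eval_pow, Polynomial.eval_X, _root_.eval_charpoly]
  by_cases hx : x = 0
  · subst hx
    rcases isEmpty_or_nonempty n with hn | hn
    · have hAB : A * B = 0 := by ext i j; simp [Matrix.mul_apply]
      rcases isEmpty_or_nonempty m with hm | hm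
      · simp [hAB, Matrix.det_isEmpty, Fintype.card_eq_zero]
      · simp [hAB, Fintype.card_eq_zero, Matrix.det_zero,
          zero_pow (Fintype.card_ne_zero (α := m))]
    · rcases isEmpty_or_nonempty m with hm | hm
      · have hBA : B * A = 0 := by ext i j; simp [Matrix.mul_apply]
        simp [hBA, Fintype.card_eq_zero, Matrix.det_zero,
          zero_pow (Fintype.card_ne_zero (α := n))]
      · simp [zero_pow (Fintype.card_ne_zero (α := n)),
          zero_pow (Fintype.card_ne_zero (α := m))]
  · haveI : Invertible (x • (1 : Matrix m m ℂ)) :=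
      ⟨x⁻¹ • 1, by simp [smul_smul, inv_mul_cancel₀ hx, mul_inv_cancel₀ hx], by
        simp [smul_smul, inv_mul_cancel₀ hx, mul_inv_cancel₀ hx]⟩
    have hinv : ⅟(x • (1 : Matrix m m ℂ)) = x⁻¹ • (1 : Matrix m m ℂ) :=
      invOf_eq_right_inv (by
        simp [smul_smul, mul_inv_cancel₀ hx, inv_mul_cancel₀ hx])
    have e1 : (Matrix.fromBlocks (x • (1 : Matrix m m ℂ)) A B (1 : Matrix n n ℂ)).det
        = (x • (1 : Matrix m m ℂ) - A * B).det := Matrix.det_fromBlocks_one₂₂ _ _ _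
    have e2 : (Matrix.fromBlocks (x • (1 : Matrix m m ℂ)) A B (1 : Matrix n n ℂ)).det
        = (x • (1 : Matrix m m ℂ)).det * ((1 : Matrix n n ℂ) - B * ⅟(x • (1 : Matrix m m ℂ)) * A).det :=
      Matrix.det_fromBlocks₁₁ _ _ _ _
    have e3 : (x • (1 : Matrix m m ℂ)).det = x ^ Fintype.card m := by
      simp [Matrix.det_smul]
    have e4 : ((1 : Matrix n n ℂ) - B * ⅟(x • (1 : Matrix m m ℂ)) * A) = (1 : Matrix n n ℂ) - x⁻¹ • (B * A) := by
      rw [hinv]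
      congr 1
      rw [Matrix.mul_smul, Matrix.mul_one, Matrix.smul_mul]
    have e5 : (x • (1 : Matrix n n ℂ) - B * A) = x • ((1 : Matrix n n ℂ) - x⁻¹ • (B * A)) := by
      rw [smul_sub, smul_smul, mul_inv_cancel₀ hx, one_smul]
    have e6 : (x • (1 : Matrix n n ℂ) - B * A).det
        = x ^ Fintype.card n * ((1 : Matrix n n ℂ) - x⁻¹ • (B * A)).det := by
      rw [e5, Matrix.det_smul]
    rw [← e1, e2, e3, e4, e6]
    ring

lemma trace_sqrt_eq_roots_sum {M : Matrix n n ℂ} (hM : M.PosSemidef) :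
    hM.sqrt.trace = (M.charpoly.roots.map (fun w => (Real.sqrt w.re : ℂ))).sum := by
  rw [trace_sqrt_eq_sum, roots_charpoly_hermitian hM.1, Multiset.map_map,
    Finset.sum_eq_multiset_sum]
  exact congrArg Multiset.sum (Multiset.map_congr rfl (fun x _ => by simp))

lemma trace_sqrt_comm (N : Matrix m n ℂ) :
    (Matrix.posSemidef_conjTranspose_mul_self N).sqrt.trace
      = (Matrix.posSemidef_self_mul_conjTranspose N).sqrt.trace := by
  have key := charpoly_pow_mul_comm N Nᴴ
  have hq : (N * Nᴴ).charpoly ≠ 0 := (Matrix.charpoly_monic _).ne_zero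
  have hp : (Nᴴ * N).charpoly ≠ 0 := (Matrix.charpoly_monic _).ne_zero
  have hroots : ((X : ℂ[X]) ^ (Fintype.card n) * (N * Nᴴ).charpoly).roots
      = ((X : ℂ[X]) ^ (Fintype.card m) * (Nᴴ * N).charpoly).roots := by rw [key]
  rw [Polynomial.roots_mul (mul_ne_zero (pow_ne_zero _ Polynomial.X_ne_zero) hq),
    Polynomial.roots_mul (mul_ne_zero (pow_ne_zero _ Polynomial.X_ne_zero) hp),
    Polynomial.roots_pow, Polynomial.roots_pow, Polynomial.roots_X] at hroots
  set g : ℂ → ℂ := fun w => (Real.sqrt w.re : ℂ) with hg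
  have hsum : ∀ (k : ℕ) (s : Multiset ℂ),
      (((k • ({0} : Multiset ℂ)) + s).map g).sum = (s.map g).sum := by
    intro k s
    rw [Multiset.map_add, Multiset.sum_add, Multiset.nsmul_singleton,
      Multiset.map_replicate, Multiset.sum_replicate]
    simp [hg]
  have hsums : (((N * Nᴴ).charpoly.roots).map g).sum
      = (((Nᴴ * N).charpoly.roots).map g).sum := by
    have h2 := congrArg (fun s : Multiset ℂ => (s.map g).sum) hroots
    rw [hsum, hsum] at h2
    exact h2
  rw [trace_sqrt_eq_roots_sum, trace_sqrt_eq_roots_sum]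
  exact hsums.symm

lemma sqrt_mul_sqrt_eq_zero {A B : Matrix n n ℂ} (hA : A.PosSemidef) (hB : B.PosSemidef)
    (hAB : A * B = 0) : hA.sqrt * hB.sqrt = 0 := by
  set C := hA.sqrt * hB.sqrt with hC
  have h1 : Cᴴ * C = hB.sqrt * A * hB.sqrt := by
    rw [hC, conjTranspose_mul, hA.posSemidef_sqrt.1.eq, hB.posSemidef_sqrt.1.eq]
    rw [Matrix.mul_assoc, Matrix.mul_assoc, ← Matrix.mul_assoc hA.sqrt,
      hA.sqrt_mul_self]
  have hpsd : (Cᴴ * C).PosSemidef := Matrix.posSemidef_conjTranspose_mul_self C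
  have h2 : (Cᴴ * C) ^ 2 = 0 := by
    rw [sq, h1]
    calc hB.sqrt * A * hB.sqrt * (hB.sqrt * A * hB.sqrt)
        = hB.sqrt * A * (hB.sqrt * hB.sqrt) * A * hB.sqrt := by
          simp only [Matrix.mul_assoc]
      _ = hB.sqrt * (A * B) * A * hB.sqrt := by
          rw [hB.sqrt_mul_self]; simp only [Matrix.mul_assoc]
      _ = 0 := by rw [hAB]; simp
  have h3 : Cᴴ * C = 0 := by
    have := hpsd.eq_of_sq_eq_sq (Matrix.PosSemidef.zero (n := n) (R := ℂ))
    simp only [ne_eq, sq] at this ⊢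
    apply hpsd.eq_of_sq_eq_sq Matrix.PosSemidef.zero
    rw [h2]; simp
  exact Matrix.conjTranspose_mul_self_eq_zero.mp h3

lemma sqrt_add_eq {A B : Matrix n n ℂ} (hA : A.PosSemidef) (hB : B.PosSemidef)
    (hAB : A * B = 0) : (hA.add hB).sqrt = hA.sqrt + hB.sqrt := by
  have hBA : B * A = 0 := by
    have := congrArg Matrix.conjTranspose hAB
    rwa [Matrix.conjTranspose_mul, hA.1.eq, hB.1.eq, Matrix.conjTranspose_zero] at this
  have h1 : hA.sqrt * hB.sqrt = 0 := sqrt_mul_sqrt_eq_zero hA hB hAB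
  have h2 : hB.sqrt * hA.sqrt = 0 := sqrt_mul_sqrt_eq_zero hB hA hBA
  refine ((hA.posSemidef_sqrt.add hB.posSemidef_sqrt).eq_sqrt_of_sq_eq (hA.add hB) ?_).symm
  rw [sq, Matrix.add_mul, Matrix.mul_add, Matrix.mul_add, h1, h2,
    hA.sqrt_mul_self, hB.sqrt_mul_self]
  simp

lemma sqrt_transpose {A : Matrix n n ℂ} (hA : A.PosSemidef) :
    (hA.transpose).sqrt = (hA.sqrt)ᵀ := by
  refine ((hA.posSemidef_sqrt.transpose).eq_sqrt_of_sq_eq hA.transpose ?_).symm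
  rw [sq, ← Matrix.transpose_mul, ← sq, hA.sq_sqrt]

end Aux

open Matrix in
/-- Guessing an XY-plane observable from the purifier: if the reduced state of
ψ on AB is |0⟩⟨0|⊗σ₀ + |1⟩⟨1|⊗σ₁, then 2·p_guess(W|C) − 1 = ‖τ₊ − τ₋‖₁
= 2‖√σ₀√σ₁‖₁, independently of θ. -/
theorem guess_xy_from_purifier
    {b c : Type*} [Fintype b] [DecidableEq b] [Fintype c] [DecidableEq c]
    (ψ : Fin 2 → b → c → ℂ) (σ₀ σ₁ : Matrix b b ℂ)
    (h₀ : σ₀.PosSemidef) (h₁ : σ₁.PosSemidef)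
    (htr : σ₀.trace + σ₁.trace = 1)
    (hred : ∀ (i k : Fin 2) (j l : b),
      (∑ m : c, ψ i j m * star (ψ k l m)) =
        if i = 0 ∧ k = 0 then σ₀ j l else if i = 1 ∧ k = 1 then σ₁ j l else 0)
    (θ : ℝ) :
    traceNorm (condC ψ (wvec θ 1) - condC ψ (wvec θ (-1)))
      = 2 * traceNorm (h₀.sqrt * h₁.sqrt) := by
  classical
  set z : ℂ := Complex.exp (Complex.I * θ) with hzdef
  have hstarz : star z = Complex.exp (-(Complex.I * θ)) := by
    rw [hzdef]
    rw [show (star (Complex.exp (Complex.I * (θ : ℂ)))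
        = (starRingEnd ℂ) (Complex.exp (Complex.I * (θ : ℂ)))) from rfl, ← Complex.exp_conj]
    congr 1
    simp [_root_.map_mul, Complex.conj_I, Complex.conj_ofReal]
  have hz : z * star z = 1 := by
    rw [hstarz, hzdef, ← Complex.exp_add, add_neg_cancel, Complex.exp_zero]
  have hz' : star z * z = 1 := by rw [mul_comm] at hz; exact hz
  set V : Fin 2 → Matrix c b ℂ := fun i => Matrix.of (fun m j => ψ i j m) with hV
  -- reduced-state relations
  have h00 : (V 0)ᴴ * V 0 = σ₀ᵀ := by
    ext l j
    have h := hred 0 0 j l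
    simp only [if_true, and_self, reduceIte] at h
    calc ((V 0)ᴴ * V 0) l j = ∑ m : c, star (ψ 0 l m) * ψ 0 j m := by
          simp [Matrix.mul_apply, Matrix.conjTranspose_apply, hV]
      _ = ∑ m : c, ψ 0 j m * star (ψ 0 l m) := Finset.sum_congr rfl (fun m _ => mul_comm _ _)
      _ = σ₀ j l := h
      _ = σ₀ᵀ l j := rfl
  have h11 : (V 1)ᴴ * V 1 = σ₁ᵀ := by
    ext l j
    have h := hred 1 1 j l
    simp only [one_ne_zero, and_false, false_and, and_self, if_false, if_true, reduceIte] at h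
    calc ((V 1)ᴴ * V 1) l j = ∑ m : c, star (ψ 1 l m) * ψ 1 j m := by
          simp [Matrix.mul_apply, Matrix.conjTranspose_apply, hV]
      _ = ∑ m : c, ψ 1 j m * star (ψ 1 l m) := Finset.sum_congr rfl (fun m _ => mul_comm _ _)
      _ = σ₁ j l := h
      _ = σ₁ᵀ l j := rfl
  have h10 : (V 1)ᴴ * V 0 = 0 := by
    ext l j
    have h := hred 0 1 j l
    simp only [zero_ne_one, one_ne_zero, and_false, false_and, and_true, if_false,
      reduceIte] at h
    calc ((V 1)ᴴ * V 0) l j = ∑ m : c, star (ψ 1 l m) * ψ 0 j m := by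
          simp [Matrix.mul_apply, Matrix.conjTranspose_apply, hV]
      _ = ∑ m : c, ψ 0 j m * star (ψ 1 l m) := Finset.sum_congr rfl (fun m _ => mul_comm _ _)
      _ = 0 := h
      _ = (0 : Matrix b b ℂ) l j := rfl
  have h01 : (V 0)ᴴ * V 1 = 0 := by
    ext l j
    have h := hred 1 0 j l
    simp only [zero_ne_one, one_ne_zero, and_false, false_and, and_true, if_false,
      reduceIte] at h
    calc ((V 0)ᴴ * V 1) l j = ∑ m : c, star (ψ 0 l m) * ψ 1 j m := by
          simp [Matrix.mul_apply, Matrix.conjTranspose_apply, hV]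
      _ = ∑ m : c, ψ 1 j m * star (ψ 0 l m) := Finset.sum_congr rfl (fun m _ => mul_comm _ _)
      _ = 0 := h
      _ = (0 : Matrix b b ℂ) l j := rfl
  set X : Matrix c c ℂ := V 0 * (V 1)ᴴ with hX
  set Y : Matrix c c ℂ := V 1 * (V 0)ᴴ with hY
  -- step 1 : entrywise identity
  have step1 : condC ψ (wvec θ 1) - condC ψ (wvec θ (-1)) = z • X + star z • Y := by
    ext m m'
    simp only [Matrix.sub_apply, condC, Matrix.of_apply, Matrix.add_apply, Matrix.smul_apply,
      hX, hY, Matrix.mul_apply, Matrix.conjTranspose_apply, hV]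
    rw [← Finset.sum_sub_distrib, Finset.smul_sum, Finset.smul_sum, ← Finset.sum_add_distrib]
    apply Finset.sum_congr rfl
    intro j _
    simp only [Fin.sum_univ_two, wvec, Matrix.cons_val_zero, Matrix.cons_val_one,
      Matrix.head_cons, smul_eq_mul]
    have hr : ((Real.sqrt 2 : ℝ) : ℂ) ≠ 0 := by
      simp only [ne_eq, Complex.ofReal_eq_zero]
      positivity
    have hr2 : ((Real.sqrt 2 : ℝ) : ℂ) * ((Real.sqrt 2 : ℝ) : ℂ) = 2 := by
      rw [← Complex.ofReal_mul, Real.mul_self_sqrt (by norm_num)]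
      norm_num
    simp only [star_add, star_mul', star_div₀, star_one, Complex.star_def,
      Complex.conj_ofReal, star_star, Complex.ofReal_neg, Complex.ofReal_one,
      Complex.conj_conj, map_neg, map_one]
    field_simp
    ring_nf
    linear_combination (-(ψ 0 j m * Complex.exp (Complex.I * (θ : ℂ)) * (starRingEnd ℂ) (ψ 1 j m'))
      - (starRingEnd ℂ) (Complex.exp (Complex.I * (θ : ℂ))) * ψ 1 j m
        * (starRingEnd ℂ) (ψ 0 j m')) * hr2
  -- products of X and Y
  have hXYm : X * Y = V 0 * σ₁ᵀ * (V 0)ᴴ := by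
    rw [hX, hY, ← Matrix.mul_assoc, Matrix.mul_assoc (V 0), h11]
  have hYXm : Y * X = V 1 * σ₀ᵀ * (V 1)ᴴ := by
    rw [hY, hX, ← Matrix.mul_assoc, Matrix.mul_assoc (V 1), h00]
  have hXXm : X * X = 0 := by
    rw [hX, ← Matrix.mul_assoc, Matrix.mul_assoc (V 0), h10]
    simp
  have hYYm : Y * Y = 0 := by
    rw [hY, ← Matrix.mul_assoc, Matrix.mul_assoc (V 1), h01]
    simp
  have hXc : Xᴴ = Y := by rw [hX, hY]; simp [Matrix.conjTranspose_mul]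
  have hYc : Yᴴ = X := by rw [hX, hY]; simp [Matrix.conjTranspose_mul]
  have hDD : (condC ψ (wvec θ 1) - condC ψ (wvec θ (-1)))ᴴ
        * (condC ψ (wvec θ 1) - condC ψ (wvec θ (-1)))
      = V 1 * σ₀ᵀ * (V 1)ᴴ + V 0 * σ₁ᵀ * (V 0)ᴴ := by
    rw [step1, Matrix.conjTranspose_add, Matrix.conjTranspose_smul,
      Matrix.conjTranspose_smul, hXc, hYc, star_star]
    rw [Matrix.add_mul, Matrix.mul_add, Matrix.mul_add]
    simp only [smul_mul_assoc, Matrix.mul_smul, smul_smul]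
    rw [hXXm, hYYm, hXYm, hYXm, hz, hz']
    simp
  -- the two rectangular factors
  set N₁ : Matrix c b ℂ := V 1 * (h₀.sqrt)ᵀ with hN₁
  set N₀ : Matrix c b ℂ := V 0 * (h₁.sqrt)ᵀ with hN₀
  have hN1H : N₁ᴴ = (h₀.sqrt)ᵀ * (V 1)ᴴ := by
    rw [hN₁, Matrix.conjTranspose_mul, (h₀.posSemidef_sqrt.1.transpose).eq]
  have hN0H : N₀ᴴ = (h₁.sqrt)ᵀ * (V 0)ᴴ := by
    rw [hN₀, Matrix.conjTranspose_mul, (h₁.posSemidef_sqrt.1.transpose).eq]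
  have hN1mul : N₁ * N₁ᴴ = V 1 * σ₀ᵀ * (V 1)ᴴ := by
    rw [hN1H, hN₁, ← Matrix.mul_assoc, Matrix.mul_assoc (V 1), ← Matrix.transpose_mul,
      h₀.sqrt_mul_self]
  have hN0mul : N₀ * N₀ᴴ = V 0 * σ₁ᵀ * (V 0)ᴴ := by
    rw [hN0H, hN₀, ← Matrix.mul_assoc, Matrix.mul_assoc (V 0), ← Matrix.transpose_mul,
      h₁.sqrt_mul_self]
  have hN1o : N₁ᴴ * N₁ = (h₀.sqrt * σ₁ * h₀.sqrt)ᵀ := by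
    rw [hN1H, hN₁, ← Matrix.mul_assoc, Matrix.mul_assoc ((h₀.sqrt)ᵀ), h11,
      ← Matrix.transpose_mul, ← Matrix.transpose_mul, ← Matrix.mul_assoc]
  have hN0o : N₀ᴴ * N₀ = (h₁.sqrt * σ₀ * h₁.sqrt)ᵀ := by
    rw [hN0H, hN₀, ← Matrix.mul_assoc, Matrix.mul_assoc ((h₁.sqrt)ᵀ), h00,
      ← Matrix.transpose_mul, ← Matrix.transpose_mul, ← Matrix.mul_assoc]
  have horth : (N₁ * N₁ᴴ) * (N₀ * N₀ᴴ) = 0 := by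
    have h1 : N₁ᴴ * N₀ = 0 := by
      rw [hN1H, hN₀, ← Matrix.mul_assoc, Matrix.mul_assoc ((h₀.sqrt)ᵀ), h10]
      simp
    rw [Matrix.mul_assoc, ← Matrix.mul_assoc (N₁ᴴ), h1]
    simp
  have hA1 : (N₁ * N₁ᴴ).PosSemidef := Matrix.posSemidef_self_mul_conjTranspose N₁
  have hA0 : (N₀ * N₀ᴴ).PosSemidef := Matrix.posSemidef_self_mul_conjTranspose N₀
  have hsplit := sqrt_add_eq hA1 hA0 horth
  -- PSD middle matrices
  have hQ1 : (h₀.sqrt * σ₁ * h₀.sqrt).PosSemidef := by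
    have := h₁.mul_mul_conjTranspose_same h₀.sqrt
    rwa [h₀.posSemidef_sqrt.1.eq] at this
  have hQ0 : (h₁.sqrt * σ₀ * h₁.sqrt).PosSemidef := by
    have := h₀.mul_mul_conjTranspose_same h₁.sqrt
    rwa [h₁.posSemidef_sqrt.1.eq] at this
  have hSTmul : (h₀.sqrt * h₁.sqrt) * (h₀.sqrt * h₁.sqrt)ᴴ = h₀.sqrt * σ₁ * h₀.sqrt := by
    rw [Matrix.conjTranspose_mul, h₀.posSemidef_sqrt.1.eq, h₁.posSemidef_sqrt.1.eq,
      ← Matrix.mul_assoc, Matrix.mul_assoc h₀.sqrt, h₁.sqrt_mul_self]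
  have hSTo : (h₀.sqrt * h₁.sqrt)ᴴ * (h₀.sqrt * h₁.sqrt) = h₁.sqrt * σ₀ * h₁.sqrt := by
    rw [Matrix.conjTranspose_mul, h₀.posSemidef_sqrt.1.eq, h₁.posSemidef_sqrt.1.eq,
      ← Matrix.mul_assoc, Matrix.mul_assoc h₁.sqrt, h₀.sqrt_mul_self]
  have t1 : hA1.sqrt.trace
      = (Matrix.posSemidef_conjTranspose_mul_self (h₀.sqrt * h₁.sqrt)).sqrt.trace := by
    calc hA1.sqrt.trace
        = (Matrix.posSemidef_conjTranspose_mul_self N₁).sqrt.trace :=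
          (trace_sqrt_comm N₁).symm
      _ = (hQ1.transpose).sqrt.trace :=
          trace_sqrt_congr _ _ hN1o
      _ = ((hQ1.sqrt)ᵀ).trace := by rw [sqrt_transpose hQ1]
      _ = hQ1.sqrt.trace := Matrix.trace_transpose _
      _ = (Matrix.posSemidef_self_mul_conjTranspose (h₀.sqrt * h₁.sqrt)).sqrt.trace :=
          (trace_sqrt_congr _ hQ1 hSTmul).symm
      _ = (Matrix.posSemidef_conjTranspose_mul_self (h₀.sqrt * h₁.sqrt)).sqrt.trace :=
          (trace_sqrt_comm _).symm
  have t0 : hA0.sqrt.trace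
      = (Matrix.posSemidef_conjTranspose_mul_self (h₀.sqrt * h₁.sqrt)).sqrt.trace := by
    calc hA0.sqrt.trace
        = (Matrix.posSemidef_conjTranspose_mul_self N₀).sqrt.trace :=
          (trace_sqrt_comm N₀).symm
      _ = (hQ0.transpose).sqrt.trace :=
          trace_sqrt_congr _ _ hN0o
      _ = ((hQ0.sqrt)ᵀ).trace := by rw [sqrt_transpose hQ0]
      _ = hQ0.sqrt.trace := Matrix.trace_transpose _
      _ = (Matrix.posSemidef_conjTranspose_mul_self (h₀.sqrt * h₁.sqrt)).sqrt.trace :=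
          (trace_sqrt_congr _ hQ0 hSTo).symm
  have e := trace_sqrt_congr
    (Matrix.posSemidef_conjTranspose_mul_self (condC ψ (wvec θ 1) - condC ψ (wvec θ (-1))))
    (hA1.add hA0) (by rw [hDD, ← hN1mul, ← hN0mul])
  calc traceNorm (condC ψ (wvec θ 1) - condC ψ (wvec θ (-1)))
      = (((hA1.add hA0).sqrt).trace).re := by rw [traceNorm, e]
    _ = ((hA1.sqrt + hA0.sqrt).trace).re := by rw [hsplit]
    _ = (hA1.sqrt.trace + hA0.sqrt.trace).re := by rw [Matrix.trace_add]
    _ = 2 * traceNorm (h₀.sqrt * h₁.sqrt) := by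
        rw [t1, t0, traceNorm, Complex.add_re]
        ring
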